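/- arXiv:1912.09219 — 2 statements merged into one kernel-verified Lean document; each statement's English description precedes it below -/
import Mathlib

section
/- For x, y ∈ ℝᵈ distinct and m a positive integer, the iterated Laplacian in y of ln(1/‖x-y‖) satisfies (-Δ)_y^m ln(1/‖x-y‖) = 2^{m-1}(m-1)! · (∏_{k=1}^m (d-2k)) / ‖x-y‖^{2m}. -/
open Real Filter

/-- The Euclidean Laplacian of `f : ℝᵈ → ℝ` as sum of second partial derivatives. -/
noncomputable def lap (d : ℕ) (f : EuclideanSpace ℝ (Fin d) → ℝ) (x : EuclideanSpace ℝ (Fin d)) : ℝ :=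
  ∑ i : Fin d,
    fderiv ℝ (fun y => fderiv ℝ f y (EuclideanSpace.single i 1)) x (EuclideanSpace.single i 1)


variable {d : ℕ}

local notation "E" => EuclideanSpace ℝ (Fin d)

lemma norm_sub_sq_pos {x z : E} (hz : z ≠ x) : 0 < ‖x - z‖ ^ 2 := by
  have : x - z ≠ 0 := sub_ne_zero.mpr (Ne.symm hz)
  have := norm_pos_iff.mpr this
  positivity

lemma hasFDerivAt_radial (x : E) (φ φ' : ℝ → ℝ)
    (h : ∀ t, 0 < t → HasDerivAt φ (φ' t) t)
    {z : E} (hz : z ≠ x) :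
    HasFDerivAt (fun w : E => φ (‖x - w‖ ^ 2))
      (φ' (‖x - z‖ ^ 2) • (2 • (innerSL ℝ (x - z)).comp (-(ContinuousLinearMap.id ℝ E)))) z := by
  have h1 : HasFDerivAt (fun w : E => x - w) (-(ContinuousLinearMap.id ℝ E)) z :=
    (hasFDerivAt_id z).const_sub x
  exact (h _ (norm_sub_sq_pos hz)).comp_hasFDerivAt z h1.norm_sq

lemma fderiv_radial (x : E) (φ φ' : ℝ → ℝ)
    (h : ∀ t, 0 < t → HasDerivAt φ (φ' t) t)
    {z : E} (hz : z ≠ x) (i : Fin d) :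
    fderiv ℝ (fun w => φ (‖x - w‖ ^ 2)) z (EuclideanSpace.single i 1)
      = φ' (‖x - z‖ ^ 2) * (-2 * (x - z) i) := by
  rw [(hasFDerivAt_radial x φ φ' h hz).fderiv]
  simp [EuclideanSpace.inner_single_right]
  ring

lemma lap_radial (x : E) (φ φ' φ'' : ℝ → ℝ)
    (h1 : ∀ t, 0 < t → HasDerivAt φ (φ' t) t)
    (h2 : ∀ t, 0 < t → HasDerivAt φ' (φ'' t) t)
    {y : E} (hy : y ≠ x) :
    lap d (fun w => φ (‖x - w‖ ^ 2)) y
      = 4 * ‖x - y‖ ^ 2 * φ'' (‖x - y‖ ^ 2) + 2 * d * φ' (‖x - y‖ ^ 2) := by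
  unfold lap
  have hopen : IsOpen {z : E | z ≠ x} := isOpen_compl_singleton
  have key : ∀ i : Fin d,
      fderiv ℝ (fun z => fderiv ℝ (fun w => φ (‖x - w‖ ^ 2)) z (EuclideanSpace.single i 1)) y
        (EuclideanSpace.single i 1)
      = 4 * φ'' (‖x - y‖ ^ 2) * ((x - y) i) ^ 2 + 2 * φ' (‖x - y‖ ^ 2) := by
    intro i
    -- the inner fderiv function agrees near y with the explicit formula
    have hev : (fun z => fderiv ℝ (fun w => φ (‖x - w‖ ^ 2)) z (EuclideanSpace.single i 1))
        =ᶠ[nhds y] (fun z => φ' (‖x - z‖ ^ 2) * (-2 * (x - z) i)) := by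
      filter_upwards [hopen.mem_nhds hy] with z hz
      exact fderiv_radial x φ φ' h1 hz i
    rw [hev.fderiv_eq]
    -- compute fderiv of the product
    have hA : HasFDerivAt (fun z : E => φ' (‖x - z‖ ^ 2))
        (φ'' (‖x - y‖ ^ 2) • (2 • (innerSL ℝ (x - y)).comp (-(ContinuousLinearMap.id ℝ E)))) y :=
      hasFDerivAt_radial x φ' φ'' h2 hy
    have hB : HasFDerivAt (fun z : E => -2 * (x - z) i)
        ((-2 : ℝ) • ((EuclideanSpace.proj i).comp (-(ContinuousLinearMap.id ℝ E)))) y := by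
      have h0 : HasFDerivAt (fun z : E => x - z) (-(ContinuousLinearMap.id ℝ E)) y :=
        (hasFDerivAt_id y).const_sub x
      have := ((EuclideanSpace.proj i).hasFDerivAt.comp y h0).const_mul (-2 : ℝ)
      simpa using this
    have := (hA.mul hB).fderiv
    rw [show (fun z : E => φ' (‖x - z‖ ^ 2) * (-2 * (x - z) i))
        = ((fun z : E => φ' (‖x - z‖ ^ 2)) * fun z : E => -2 * (x - z) i) from rfl, this]
    simp [EuclideanSpace.inner_single_right, EuclideanSpace.proj]
    ring
  rw [Finset.sum_congr rfl fun i _ => key i]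
  rw [Finset.sum_add_distrib, Finset.sum_const]
  have hnorm : ∑ i : Fin d, ((x - y) i) ^ 2 = ‖x - y‖ ^ 2 := by
    rw [EuclideanSpace.norm_eq, Real.sq_sqrt (by positivity)]
    simp [sq_abs]
  rw [← Finset.mul_sum, hnorm]
  simp
  ring

lemma lap_congr (x : E) (f g : E → ℝ) (hfg : ∀ z : E, z ≠ x → f z = g z)
    {y : E} (hy : y ≠ x) : lap d f y = lap d g y := by
  unfold lap
  have hopen : IsOpen {z : E | z ≠ x} := isOpen_compl_singleton
  refine Finset.sum_congr rfl fun i _ => ?_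
  have hev : (fun z => fderiv ℝ f z (EuclideanSpace.single i 1))
      =ᶠ[nhds y] (fun z => fderiv ℝ g z (EuclideanSpace.single i 1)) := by
    filter_upwards [hopen.mem_nhds hy] with z hz
    have : f =ᶠ[nhds z] g := by
      filter_upwards [hopen.mem_nhds hz] with w hw using hfg w hw
    rw [this.fderiv_eq]
  rw [hev.fderiv_eq]

lemma Crec (n : ℕ) (hn : 1 ≤ n) :
    (2:ℝ) ^ n * (Nat.factorial n) * ∏ k ∈ Finset.Icc 1 (n+1), ((d : ℝ) - 2 * k)
      = 2 * n * ((d:ℝ) - 2 * (n+1)) *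
        ((2:ℝ) ^ (n-1) * (Nat.factorial (n-1)) * ∏ k ∈ Finset.Icc 1 n, ((d : ℝ) - 2 * k)) := by
  rw [Finset.prod_Icc_succ_top (by omega : 1 ≤ n + 1)]
  obtain ⟨m, rfl⟩ : ∃ m, n = m + 1 := ⟨n - 1, by omega⟩
  simp [pow_succ, Nat.factorial_succ]
  ring

lemma iter_eq (x : E) : ∀ n : ℕ, 1 ≤ n → ∀ z : E, z ≠ x →
    ((fun g => fun w : E => -lap d g w)^[n] (fun w : E => Real.log (1 / ‖x - w‖))) z
      = ((2:ℝ) ^ (n-1) * (Nat.factorial (n-1)) * ∏ k ∈ Finset.Icc 1 n, ((d : ℝ) - 2 * k)) *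
          (‖x - z‖ ^ 2) ^ (-(n:ℝ)) := by
  intro n hn
  induction n, hn using Nat.le_induction with
  | base =>
    intro z hz
    rw [Function.iterate_one]
    have hcong : lap d (fun w : E => Real.log (1 / ‖x - w‖)) z
        = lap d (fun w : E => (-(1/2 : ℝ)) * Real.log (‖x - w‖ ^ 2)) z := by
      refine lap_congr x _ _ (fun w hw => ?_) hz
      have hr : (0:ℝ) < ‖x - w‖ := by
        rw [norm_pos_iff]; exact sub_ne_zero.mpr (Ne.symm hw)
      rw [one_div, Real.log_inv, Real.log_pow]
      push_cast; ring
    rw [hcong, lap_radial x _ (fun t => -(1/2 : ℝ) * t⁻¹) (fun t => (1/2 : ℝ) * (t^2)⁻¹)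
      (fun t ht => (Real.hasDerivAt_log (ne_of_gt ht)).const_mul _)
      (fun t ht => by simpa using (hasDerivAt_inv (ne_of_gt ht)).const_mul (-(1/2):ℝ)) hz]
    have ht : (0:ℝ) < ‖x - z‖ ^ 2 := norm_sub_sq_pos hz
    rw [Nat.cast_one, Real.rpow_neg_one]
    simp [Nat.factorial]
    field_simp
    ring
  | succ n hn ih =>
    intro z hz
    rw [Function.iterate_succ_apply']
    set C : ℝ := (2:ℝ) ^ (n-1) * (Nat.factorial (n-1)) * ∏ k ∈ Finset.Icc 1 n, ((d : ℝ) - 2 * k)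
      with hC
    have hcong : lap d ((fun g => fun w : E => -lap d g w)^[n] (fun w : E => Real.log (1 / ‖x - w‖))) z
        = lap d (fun w : E => C * (‖x - w‖ ^ 2) ^ (-(n:ℝ))) z :=
      lap_congr x _ _ (fun w hw => ih w hw) hz
    show -lap d _ z = _
    rw [hcong, lap_radial x (fun t => C * t ^ (-(n:ℝ))) (fun t => C * (-(n:ℝ)) * t ^ (-(n:ℝ) - 1))
        (fun t => C * (-(n:ℝ)) * (-(n:ℝ) - 1) * t ^ (-(n:ℝ) - 2))
        (fun t ht => by
          have := (Real.hasDerivAt_rpow_const (p := -(n:ℝ)) (Or.inl (ne_of_gt ht))).const_mul C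
          exact this.congr_deriv (by ring))
        (fun t ht => by
          have := (Real.hasDerivAt_rpow_const (p := -(n:ℝ) - 1) (Or.inl (ne_of_gt ht))).const_mul
            (C * (-(n:ℝ)))
          rw [show -(n:ℝ) - 1 - 1 = -(n:ℝ) - 2 from by ring] at this
          exact this.congr_deriv (by ring)) hz]
    have ht : (0:ℝ) < ‖x - z‖ ^ 2 := norm_sub_sq_pos hz
    set t : ℝ := ‖x - z‖ ^ 2 with hts
    have hab : t * t ^ (-(n:ℝ) - 2) = t ^ (-(n:ℝ) - 1) := by
      have : t ^ (-(n:ℝ) - 1) = t ^ ((1:ℝ) + (-(n:ℝ) - 2)) := by ring_nf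
      rw [this, Real.rpow_add ht, Real.rpow_one]
    have ha' : t ^ (-((n+1:ℕ):ℝ)) = t ^ (-(n:ℝ) - 1) := by
      congr 1
      push_cast; ring
    rw [ha', Nat.add_sub_cancel, Crec n hn, ← hC]
    linear_combination (-4*C*(n:ℝ)*((n:ℝ)+1)) * hab

theorem iterated_neg_laplacian_log (d m : ℕ) (hd : 2 ≤ d) (hm : 1 ≤ m)
    (x y : EuclideanSpace ℝ (Fin d)) (hxy : y ≠ x) :
    ((fun g => fun z => -lap d g z)^[m] (fun z => Real.log (1 / ‖x - z‖))) y
      = 2 ^ (m - 1) * (Nat.factorial (m - 1)) *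
          (∏ k ∈ Finset.Icc 1 m, ((d : ℝ) - 2 * k)) / ‖x - y‖ ^ (2 * m) := by
  rw [iter_eq x m hm y hxy]
  have ht : (0:ℝ) < ‖x - y‖ ^ 2 := norm_sub_sq_pos hxy
  rw [Real.rpow_neg ht.le, Real.rpow_natCast, ← pow_mul, div_eq_mul_inv]
end

section
/- Law of the total volume: let s, b, d, μ > 0 and Z₀ be a positive random variable with E[Z₀^{-s/b}] ∈ (0,∞). Define, for bounded measurable F: (0,∞) → ℝ, the functional E^L[F] := (∫_ℝ e^{dsc} E[F(e^{dbc} Z₀) exp(-μ e^{dbc} Z₀)] dc) / (∫_ℝ e^{dsc} E[exp(-μ e^{dbc} Z₀)] dc). Then E^L[F] = μ^{s/b}/Γ(s/b) · ∫₀^∞ F(y) y^{s/b - 1} e^{-μ y} dy; i.e., under the Liouville law the total volume e^{dbc}Z₀ has Gamma(s/b, μ) distribution. -/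
open MeasureTheory

private lemma cv_key (k a : ℝ) (hk : 0 < k) {z : ℝ} (hz : 0 < z) (g : ℝ → ℝ) (c : ℝ) :
    |Real.exp (k * c) * k * z| •
        ((fun y : ℝ => y ^ (a - 1) * g y * (z ^ (-a) / k)) (Real.exp (k * c) * z))
      = Real.exp (k * a * c) * g (Real.exp (k * c) * z) := by
  have he : (0:ℝ) < Real.exp (k * c) := Real.exp_pos _
  have hw : (0:ℝ) < Real.exp (k * c) * z := mul_pos he hz
  have habs : |Real.exp (k * c) * k * z| = Real.exp (k * c) * k * z :=
    abs_of_pos (by positivity)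
  have h1 : (Real.exp (k * c) * z) ^ (a - 1) * (Real.exp (k * c) * z)
      = (Real.exp (k * c) * z) ^ a := by
    rw [← Real.rpow_add_one hw.ne' (a - 1), sub_add_cancel]
  have h2 : (Real.exp (k * c) * z) ^ a = Real.exp (k * a * c) * z ^ a := by
    rw [Real.mul_rpow he.le hz.le, ← Real.exp_mul]
    ring_nf
  have h3 : z ^ a * z ^ (-a) = 1 := by
    rw [← Real.rpow_add hz, add_neg_cancel, Real.rpow_zero]
  have hkk : k / k = 1 := div_self hk.ne'
  simp only [smul_eq_mul, habs]
  calc Real.exp (k * c) * k * z *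
        ((Real.exp (k * c) * z) ^ (a - 1) * g (Real.exp (k * c) * z) * (z ^ (-a) / k))
      = ((Real.exp (k * c) * z) ^ (a - 1) * (Real.exp (k * c) * z)) * z ^ (-a) *
          g (Real.exp (k * c) * z) * (k / k) := by ring
    _ = (Real.exp (k * a * c) * (z ^ a * z ^ (-a))) * g (Real.exp (k * c) * z) * 1 := by
        rw [h1, h2, hkk]; ring
    _ = Real.exp (k * a * c) * g (Real.exp (k * c) * z) := by rw [h3]; ring

private lemma cv_img (k : ℝ) (hk : 0 < k) {z : ℝ} (hz : 0 < z) :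
    (fun c : ℝ => Real.exp (k * c) * z) '' Set.univ = Set.Ioi 0 := by
  ext y
  simp only [Set.image_univ, Set.mem_range, Set.mem_Ioi]
  constructor
  · rintro ⟨c, rfl⟩; positivity
  · intro hy
    refine ⟨Real.log (y / z) / k, ?_⟩
    rw [mul_comm k, div_mul_cancel₀ _ hk.ne', Real.exp_log (by positivity),
      div_mul_cancel₀ _ hz.ne']

private lemma cv_deriv (k : ℝ) (z : ℝ) :
    ∀ x ∈ Set.univ, HasDerivWithinAt (fun c : ℝ => Real.exp (k * c) * z)
      (Real.exp (k * x) * k * z) Set.univ x := by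
  intro x _
  have h : HasDerivAt (fun c : ℝ => k * c) k x := by
    simpa using (hasDerivAt_id x).const_mul k
  exact ((h.exp).mul_const z).hasDerivWithinAt

private lemma cv_inj (k : ℝ) (hk : 0 < k) {z : ℝ} (hz : 0 < z) :
    Set.InjOn (fun c : ℝ => Real.exp (k * c) * z) Set.univ := by
  intro x _ y _ h
  simp only at h
  have h2 : Real.exp (k * x) = Real.exp (k * y) := mul_right_cancel₀ hz.ne' h
  have h3 : k * x = k * y := Real.exp_injective h2
  exact mul_left_cancel₀ hk.ne' h3

private lemma cv_eq (k a : ℝ) (hk : 0 < k) {z : ℝ} (hz : 0 < z) (g : ℝ → ℝ) :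
    (∫ c : ℝ, Real.exp (k * a * c) * g (Real.exp (k * c) * z))
      = z ^ (-a) / k * ∫ y in Set.Ioi (0:ℝ), y ^ (a - 1) * g y := by
  have hfun : (fun c : ℝ => Real.exp (k * a * c) * g (Real.exp (k * c) * z))
      = fun c : ℝ => |Real.exp (k * c) * k * z| •
          ((fun y : ℝ => y ^ (a - 1) * g y * (z ^ (-a) / k)) (Real.exp (k * c) * z)) :=
    funext fun c => (cv_key k a hk hz g c).symm
  rw [hfun, ← MeasureTheory.setIntegral_univ,
    ← integral_image_eq_integral_abs_deriv_smul MeasurableSet.univ (cv_deriv k z)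
      (cv_inj k hk hz) (fun y : ℝ => y ^ (a - 1) * g y * (z ^ (-a) / k)),
    cv_img k hk hz, integral_mul_const, mul_comm]

private lemma cv_int (k a : ℝ) (hk : 0 < k) {z : ℝ} (hz : 0 < z) (g : ℝ → ℝ)
    (hg : IntegrableOn (fun y : ℝ => y ^ (a - 1) * g y) (Set.Ioi 0)) :
    Integrable (fun c : ℝ => Real.exp (k * a * c) * g (Real.exp (k * c) * z)) := by
  have h0 : IntegrableOn (fun y : ℝ => y ^ (a - 1) * g y * (z ^ (-a) / k)) (Set.Ioi 0) :=
    hg.mul_const _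
  rw [← cv_img k hk hz,
    integrableOn_image_iff_integrableOn_abs_deriv_smul MeasurableSet.univ (cv_deriv k z)
      (cv_inj k hk hz)] at h0
  have hfun : (fun c : ℝ => Real.exp (k * a * c) * g (Real.exp (k * c) * z))
      = fun c : ℝ => |Real.exp (k * c) * k * z| •
          ((fun y : ℝ => y ^ (a - 1) * g y * (z ^ (-a) / k)) (Real.exp (k * c) * z)) :=
    funext fun c => (cv_key k a hk hz g c).symm
  rw [hfun]
  simpa [IntegrableOn] using h0

theorem total_volume_gamma_law {Ω : Type*} [MeasureSpace Ω]
    [IsProbabilityMeasure (volume : Measure Ω)]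
    (s d b μ : ℝ) (hs : 0 < s) (hd : 0 < d) (hb : 0 < b) (hμ : 0 < μ)
    (Z₀ : Ω → ℝ) (hZmeas : Measurable Z₀) (hZpos : ∀ ω, 0 < Z₀ ω)
    (hZint : Integrable (fun ω => Z₀ ω ^ (-(s / b))))
    (hZpos' : 0 < ∫ ω, Z₀ ω ^ (-(s / b)))
    (F : ℝ → ℝ) (hFmeas : Measurable F) (hFbd : ∃ C, ∀ y, |F y| ≤ C) :
    (∫ c : ℝ, Real.exp (d * s * c) *
        ∫ ω, F (Real.exp (d * b * c) * Z₀ ω) * Real.exp (-μ * Real.exp (d * b * c) * Z₀ ω)) /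
      (∫ c : ℝ, Real.exp (d * s * c) * ∫ ω, Real.exp (-μ * Real.exp (d * b * c) * Z₀ ω))
      = μ ^ (s / b) / Real.Gamma (s / b) *
          ∫ y in Set.Ioi (0 : ℝ), F y * y ^ (s / b - 1) * Real.exp (-μ * y) := by
  set a := s / b with ha_def
  have ha : 0 < a := div_pos hs hb
  set k := d * b with hk_def
  have hk : 0 < k := mul_pos hd hb
  have hexp_eq : ∀ c : ℝ, d * s * c = k * a * c := by
    intro c; rw [hk_def, ha_def]; field_simp
  -- Gamma-type integrability
  have hGamma_int : ∀ (G : ℝ → ℝ), Measurable G → (∃ C, ∀ y, |G y| ≤ C) →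
      IntegrableOn (fun y : ℝ => y ^ (a - 1) * (G y * Real.exp (-μ * y))) (Set.Ioi 0) := by
    rintro G hGm ⟨C, hC⟩
    have hbase : IntegrableOn (fun y : ℝ => y ^ (a - 1) * Real.exp (-μ * y)) (Set.Ioi 0) := by
      have := integrableOn_rpow_mul_exp_neg_mul_rpow (s := a - 1) (p := 1) (b := μ)
        (by linarith) zero_lt_one hμ
      simpa using this
    have hym : Measurable fun y : ℝ => y ^ (a - 1) := by fun_prop
    refine Integrable.mono' (hbase.const_mul C) ?_ ?_
    · exact ((hym.mul (hGm.mul ((measurable_id.const_mul (-μ)).exp)))).aestronglyMeasurable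
    · filter_upwards [ae_restrict_mem measurableSet_Ioi] with y hy
      have h1 : (0:ℝ) < y := hy
      calc ‖y ^ (a - 1) * (G y * Real.exp (-μ * y))‖
          = y ^ (a - 1) * (|G y| * Real.exp (-μ * y)) := by
            rw [Real.norm_eq_abs, abs_mul, abs_mul,
              abs_of_nonneg (Real.rpow_nonneg h1.le _), abs_of_nonneg (Real.exp_pos _).le]
        _ ≤ y ^ (a - 1) * (C * Real.exp (-μ * y)) := by
            refine mul_le_mul_of_nonneg_left ?_ (Real.rpow_nonneg h1.le _)
            exact mul_le_mul_of_nonneg_right (hC y) (Real.exp_pos _).le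
        _ = C * (y ^ (a - 1) * Real.exp (-μ * y)) := by ring
  -- main computation
  have main : ∀ (g : ℝ → ℝ), Measurable g →
      IntegrableOn (fun y : ℝ => y ^ (a - 1) * g y) (Set.Ioi 0) →
      (∫ c : ℝ, Real.exp (k * a * c) * ∫ ω, g (Real.exp (k * c) * Z₀ ω))
        = (∫ ω, Z₀ ω ^ (-a)) * ((∫ y in Set.Ioi (0:ℝ), y ^ (a - 1) * g y) / k) := by
    intro g hgm hIg
    have hH_meas : Measurable (fun p : ℝ × Ω =>
        Real.exp (k * a * p.1) * g (Real.exp (k * p.1) * Z₀ p.2)) :=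
      ((measurable_fst.const_mul (k * a)).exp).mul
        (hgm.comp ((measurable_fst.const_mul k).exp.mul (hZmeas.comp measurable_snd)))
    have hprod : Integrable (Function.uncurry fun (c : ℝ) (ω : Ω) =>
        Real.exp (k * a * c) * g (Real.exp (k * c) * Z₀ ω))
        ((volume : Measure ℝ).prod (volume : Measure Ω)) := by
      show Integrable (fun p : ℝ × Ω =>
        Real.exp (k * a * p.1) * g (Real.exp (k * p.1) * Z₀ p.2))
        ((volume : Measure ℝ).prod (volume : Measure Ω))
      rw [integrable_prod_iff' hH_meas.aestronglyMeasurable]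
      constructor
      · exact Filter.Eventually.of_forall fun ω => cv_int k a hk (hZpos ω) g hIg
      · have heq : ∀ ω : Ω,
            (∫ c : ℝ, ‖Real.exp (k * a * c) * g (Real.exp (k * c) * Z₀ ω)‖)
              = Z₀ ω ^ (-a) * ((∫ y in Set.Ioi (0:ℝ), y ^ (a - 1) * |g y|) / k) := by
          intro ω
          have hfun : (fun c : ℝ => ‖Real.exp (k * a * c) * g (Real.exp (k * c) * Z₀ ω)‖)
              = fun c : ℝ => Real.exp (k * a * c) * (fun y => |g y|) (Real.exp (k * c) * Z₀ ω) := by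
            funext c
            rw [Real.norm_eq_abs, abs_mul, abs_of_pos (Real.exp_pos _)]
          rw [hfun, cv_eq k a hk (hZpos ω) (fun y => |g y|)]
          ring
        exact (hZint.mul_const _).congr (Filter.Eventually.of_forall fun ω => (heq ω).symm)
    calc (∫ c : ℝ, Real.exp (k * a * c) * ∫ ω, g (Real.exp (k * c) * Z₀ ω))
        = ∫ c : ℝ, ∫ ω, Real.exp (k * a * c) * g (Real.exp (k * c) * Z₀ ω) := by
          simp_rw [integral_const_mul]
      _ = ∫ ω, ∫ c : ℝ, Real.exp (k * a * c) * g (Real.exp (k * c) * Z₀ ω) :=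
          integral_integral_swap hprod
      _ = ∫ ω, Z₀ ω ^ (-a) / k * ∫ y in Set.Ioi (0:ℝ), y ^ (a - 1) * g y :=
          integral_congr_ae (Filter.Eventually.of_forall fun ω => cv_eq k a hk (hZpos ω) g)
      _ = ∫ ω, Z₀ ω ^ (-a) * ((∫ y in Set.Ioi (0:ℝ), y ^ (a - 1) * g y) / k) := by
          congr 1; funext ω; ring
      _ = (∫ ω, Z₀ ω ^ (-a)) * ((∫ y in Set.Ioi (0:ℝ), y ^ (a - 1) * g y) / k) :=
          integral_mul_const _ _
  -- apply to the two integrands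
  have hexpm : Measurable (fun y : ℝ => Real.exp (-μ * y)) :=
    (measurable_id.const_mul (-μ)).exp
  have hg1m : Measurable (fun y : ℝ => F y * Real.exp (-μ * y)) := hFmeas.mul hexpm
  have hI1 := hGamma_int F hFmeas hFbd
  have hI2' := hGamma_int (fun _ => 1) measurable_const ⟨1, fun y => by norm_num⟩
  have hI2 : IntegrableOn (fun y : ℝ => y ^ (a - 1) * Real.exp (-μ * y)) (Set.Ioi 0) := by
    simpa using hI2'
  have h1 := main (fun y => F y * Real.exp (-μ * y)) hg1m hI1
  have h2 := main (fun y => Real.exp (-μ * y)) hexpm hI2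
  have harg : ∀ x y : ℝ, -μ * x * y = -μ * (x * y) := fun x y => mul_assoc _ _ _
  rw [show (∫ c : ℝ, Real.exp (d * s * c) *
        ∫ ω, F (Real.exp (k * c) * Z₀ ω) * Real.exp (-μ * Real.exp (k * c) * Z₀ ω))
      = ∫ c : ℝ, Real.exp (k * a * c) *
        ∫ ω, F (Real.exp (k * c) * Z₀ ω) * Real.exp (-μ * (Real.exp (k * c) * Z₀ ω)) from by
    simp_rw [hexp_eq, harg],
    show (∫ c : ℝ, Real.exp (d * s * c) * ∫ ω, Real.exp (-μ * Real.exp (k * c) * Z₀ ω))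
      = ∫ c : ℝ, Real.exp (k * a * c) * ∫ ω, Real.exp (-μ * (Real.exp (k * c) * Z₀ ω)) from by
    simp_rw [hexp_eq, harg],
    h1, h2]
  -- compute the gamma integral
  have hIgamma : (∫ y in Set.Ioi (0:ℝ), y ^ (a - 1) * Real.exp (-μ * y))
      = (1 / μ) ^ a * Real.Gamma a := by
    rw [← Real.integral_rpow_mul_exp_neg_mul_Ioi ha hμ]
    congr 1; funext y; rw [neg_mul]
  rw [hIgamma]
  have hrw : (∫ y in Set.Ioi (0:ℝ), F y * y ^ (a - 1) * Real.exp (-μ * y))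
      = ∫ y in Set.Ioi (0:ℝ), y ^ (a - 1) * (F y * Real.exp (-μ * y)) := by
    congr 1; funext y; ring
  rw [hrw]
  set E := ∫ ω, Z₀ ω ^ (-a) with hE_def
  set I := ∫ y in Set.Ioi (0:ℝ), y ^ (a - 1) * (F y * Real.exp (-μ * y)) with hI_def
  have hΓ : (0:ℝ) < Real.Gamma a := Real.Gamma_pos_of_pos ha
  have hP : (0:ℝ) < (1 / μ) ^ a := Real.rpow_pos_of_pos (by positivity) _
  have hμa : (0:ℝ) < μ ^ a := Real.rpow_pos_of_pos hμ _
  have hPμ : (1 / μ) ^ a * μ ^ a = 1 := by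
    rw [← Real.mul_rpow (by positivity) hμ.le, one_div_mul_cancel hμ.ne', Real.one_rpow]
  have hE : E ≠ 0 := hZpos'.ne'
  field_simp
  linear_combination (-I) * hPμ
end
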